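/- Let f ∈ 𝔽₂[a₂,a₆]. If χ(f) equals the image of f under the canonical inclusion 𝔽₂[a₂,a₆] → 𝔽₂[a₂,a₆][s,t], then f is a constant, i.e. f ∈ 𝔽₂. In other words, the invariants of the reduced Hopf algebroid (D̄,Σ̄) = (𝔽₂[a₂,a₆], D̄[s,t]) with trivial coefficients are exactly 𝔽₂. -/
import Mathlib


open MvPolynomial

noncomputable section

/-- `D̄ = 𝔽₂[a₂, a₆]`, with variables indexed `0 ↦ a₂, 1 ↦ a₆`. -/
abbrev Dbar : Type := MvPolynomial (Fin 2) (ZMod 2)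

/-- `Σ̄ = D̄[s, t]`, with `0 ↦ s` and `1 ↦ t`. -/
abbrev Sbar : Type := MvPolynomial (Fin 2) Dbar

def a2 : Dbar := X 0
def a6 : Dbar := X 1

def s : Sbar := X 0
def t : Sbar := X 1

/-- The right unit of the reduced Hopf algebroid `(D̄, Σ̄) = (𝔽₂[a₂, a₆], D̄[s, t])`:
`a₂ ↦ a₂ + s²`, `a₆ ↦ a₆ + t²`. -/
def χ : Dbar →+* Sbar :=
  (aeval ![C a2 + s ^ 2, C a6 + t ^ 2] : Dbar →ₐ[ZMod 2] Sbar).toRingHom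

/-- Squaring map on `Dbar` realized as evaluation at `X i ^ 2`. -/
lemma sq_eval (f : Dbar) :
    eval₂Hom (C : ZMod 2 →+* Dbar) ![X 0 ^ 2, X 1 ^ 2] f = f ^ 2 := by
  induction f using MvPolynomial.induction_on with
  | C r =>
      simp [← C_pow, ZMod.pow_card]
  | add p q hp hq =>
      rw [map_add, hp, hq, add_pow_char]
  | mul_X p i hp =>
      rw [map_mul, hp, eval₂Hom_X', mul_pow]
      fin_cases i <;> simp

/-- Evaluation `Sbar → Dbar`: coefficients at `0`, variables `s ↦ X 0`, `t ↦ X 1`. -/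
def ψ : Sbar →+* Dbar :=
  eval₂Hom ((C : ZMod 2 →+* Dbar).comp constantCoeff) ![X 0, X 1]

lemma psi_chi (f : Dbar) : ψ (χ f) = f ^ 2 := by
  rw [← sq_eval f]
  have : ψ.comp χ = eval₂Hom (C : ZMod 2 →+* Dbar) ![X 0 ^ 2, X 1 ^ 2] := by
    apply MvPolynomial.ringHom_ext
    · intro r
      simp [ψ, χ]
    · intro i
      fin_cases i <;>
        simp [ψ, χ, a2, a6, s, t]
  exact DFunLike.congr_fun this f

/-- The invariants of the reduced Hopf algebroid `(D̄, Σ̄)` are exactly the constants `𝔽₂`: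
if `χ(f)` equals the image of `f` under the canonical inclusion, then `f` is constant. -/
theorem invariant_imp_constant (f : Dbar) (h : χ f = C f) :
    ∃ c : ZMod 2, f = C c := by
  refine ⟨constantCoeff f, ?_⟩
  have h2 : f ^ 2 = C (constantCoeff f) := by
    have := congrArg ψ h
    rwa [psi_chi, show ψ (C f) = C (constantCoeff f) by simp [ψ]] at this
  have h3 : (f - C (constantCoeff f)) ^ 2 = 0 := by
    rw [sub_pow_char, h2, ← C_pow, ZMod.pow_card, sub_self]
  have h4 : f - C (constantCoeff f) = 0 := by
    exact pow_eq_zero_iff (by norm_num) |>.mp h3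
  linear_combination h4
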